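/- Let f : ℝ → ℝ be differentiable with f(y₀) = 0 and f'(y₀) = 1 at some point y₀ ∈ ℝ. For n ∈ ℕ define ψₙ : ℝ² → ℝ² by ψₙ(y, z) = (y, z + n · f(y)). Then each ψₙ is a bijection of ℝ², its Fréchet derivative at the point m = (y₀, z₀) (for any z₀ ∈ ℝ) is the linear map (u, v) ↦ (u, n·u + v), the operator norm satisfies ‖fderiv ℝ ψₙ (y₀, z₀)‖ ≥ n, and hence ‖fderiv ℝ ψₙ (y₀, z₀)‖ tends to infinity as n → ∞. In particular there is no constant μ bounding the operator norms of the derivatives of all the ψₙ at (y₀, z₀). -/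

import Mathlib

open Filter

/-- The derivative candidate `(u, v) ↦ (u, n u + v)`, landing in plain `Fin 2 → ℝ`. -/
noncomputable def auxL (n : ℕ) : EuclideanSpace ℝ (Fin 2) →L[ℝ] (Fin 2 → ℝ) :=
  ContinuousLinearMap.pi
    ![EuclideanSpace.proj 0,
      (n : ℝ) • (EuclideanSpace.proj 0 : EuclideanSpace ℝ (Fin 2) →L[ℝ] ℝ)
        + EuclideanSpace.proj 1]

/-- The holonomy-type maps `ψₙ(y, z) = (y, z + n f(y))` of the counter-example:
each is a bijection of Euclidean `ℝ²`, its derivative at `(y₀, z₀)` is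
`(u, v) ↦ (u, n u + v)`, the operator norms of these derivatives are at least `n`,
tend to infinity, and in particular admit no uniform upper bound. -/
theorem counterexample_unbounded_holonomy_derivatives
    (f : ℝ → ℝ) (hf : Differentiable ℝ f)
    (y₀ : ℝ) (hf0 : f y₀ = 0) (hf1 : deriv f y₀ = 1) (z₀ : ℝ)
    (ψ : ℕ → EuclideanSpace ℝ (Fin 2) → EuclideanSpace ℝ (Fin 2))
    (hψ : ∀ n : ℕ, ∀ p : EuclideanSpace ℝ (Fin 2),
      ψ n p = ![p 0, p 1 + (n : ℝ) * f (p 0)]) :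
    (∀ n : ℕ, Function.Bijective (ψ n)) ∧
    (∀ n : ℕ, ∀ w : EuclideanSpace ℝ (Fin 2),
      fderiv ℝ (ψ n) (WithLp.toLp 2 ![y₀, z₀]) w = ![w 0, (n : ℝ) * w 0 + w 1]) ∧
    (∀ n : ℕ, (n : ℝ) ≤ ‖fderiv ℝ (ψ n) (WithLp.toLp 2 ![y₀, z₀])‖) ∧
    Tendsto (fun n : ℕ => ‖fderiv ℝ (ψ n) (WithLp.toLp 2 ![y₀, z₀])‖) atTop atTop ∧
    ¬ ∃ μ : ℝ, ∀ n : ℕ, ‖fderiv ℝ (ψ n) (WithLp.toLp 2 ![y₀, z₀])‖ ≤ μ := by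
  classical
  set e := PiLp.continuousLinearEquiv 2 ℝ (fun _ : Fin 2 => ℝ) with he
  set m : EuclideanSpace ℝ (Fin 2) := WithLp.toLp 2 ![y₀, z₀] with hm
  have hm0 : m 0 = y₀ := rfl
  have hm1 : m 1 = z₀ := rfl
  have hφ : ∀ n : ℕ, HasFDerivAt (fun (x : EuclideanSpace ℝ (Fin 2)) (i : Fin 2) =>
      (![(fun p : EuclideanSpace ℝ (Fin 2) => p 0),
         (fun p : EuclideanSpace ℝ (Fin 2) => p 1 + (n : ℝ) * f (p 0))]) i x)
      (auxL n) m := by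
    intro n
    have h0 : HasFDerivAt (fun p : EuclideanSpace ℝ (Fin 2) => p 0)
        ((EuclideanSpace.proj (0 : Fin 2) : EuclideanSpace ℝ (Fin 2) →L[ℝ] ℝ)) m := by
      have := (EuclideanSpace.proj (0 : Fin 2) : EuclideanSpace ℝ (Fin 2) →L[ℝ] ℝ).hasFDerivAt (x := m)
      simpa using this
    have hd : HasDerivAt f 1 (m 0) := by rw [hm0]; simpa [hf1] using (hf y₀).hasDerivAt
    have h1 : HasFDerivAt (fun p : EuclideanSpace ℝ (Fin 2) => f (p 0))
        ((1 : ℝ) • (EuclideanSpace.proj (0 : Fin 2) : EuclideanSpace ℝ (Fin 2) →L[ℝ] ℝ)) m :=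
      hd.comp_hasFDerivAt m h0
    have h2 := h1.const_mul (n : ℝ)
    have h3 : HasFDerivAt (fun p : EuclideanSpace ℝ (Fin 2) => p 1)
        ((EuclideanSpace.proj (1 : Fin 2) : EuclideanSpace ℝ (Fin 2) →L[ℝ] ℝ)) m := by
      have := (EuclideanSpace.proj (1 : Fin 2) : EuclideanSpace ℝ (Fin 2) →L[ℝ] ℝ).hasFDerivAt (x := m)
      simpa using this
    have h4 := h3.add h2
    have key : ∀ i : Fin 2, HasFDerivAt
        ((![(fun p : EuclideanSpace ℝ (Fin 2) => p 0),
           (fun p : EuclideanSpace ℝ (Fin 2) => p 1 + (n : ℝ) * f (p 0))]) i)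
        ((![EuclideanSpace.proj 0,
            (n : ℝ) • (EuclideanSpace.proj 0 : EuclideanSpace ℝ (Fin 2) →L[ℝ] ℝ)
              + EuclideanSpace.proj 1]) i) m := by
      intro i
      have h5 : HasFDerivAt (fun x : EuclideanSpace ℝ (Fin 2) => x 1 + (n : ℝ) * f (x 0))
          ((n : ℝ) • (EuclideanSpace.proj (0 : Fin 2) : EuclideanSpace ℝ (Fin 2) →L[ℝ] ℝ)
            + EuclideanSpace.proj 1) m := by
        refine h4.congr_fderiv ?_
        rw [one_smul, add_comm]
      fin_cases i
      · simpa using h0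
      · simpa using h5
    exact hasFDerivAt_pi.2 key
  have hψe : ∀ n : ℕ, ψ n = ⇑e.symm ∘ (fun (x : EuclideanSpace ℝ (Fin 2)) (i : Fin 2) =>
      (![(fun p : EuclideanSpace ℝ (Fin 2) => p 0),
         (fun p : EuclideanSpace ℝ (Fin 2) => p 1 + (n : ℝ) * f (p 0))]) i x) := by
    intro n
    funext p
    ext i
    rw [hψ n p]
    fin_cases i <;> rfl
  have hkey : ∀ n : ℕ, HasFDerivAt (ψ n)
      (((e.symm : (Fin 2 → ℝ) →L[ℝ] EuclideanSpace ℝ (Fin 2))).comp (auxL n)) m := by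
    intro n
    rw [hψe n]
    exact e.symm.comp_hasFDerivAt_iff.2 (hφ n)
  have hfd : ∀ n : ℕ, fderiv ℝ (ψ n) m
      = ((e.symm : (Fin 2 → ℝ) →L[ℝ] EuclideanSpace ℝ (Fin 2))).comp (auxL n) := fun n =>
    (hkey n).fderiv
  have claim2 : ∀ n : ℕ, ∀ w : EuclideanSpace ℝ (Fin 2),
      fderiv ℝ (ψ n) m w = ![w 0, (n : ℝ) * w 0 + w 1] := by
    intro n w
    rw [hfd n]
    funext i
    fin_cases i <;>
      simp [auxL, e, ContinuousLinearMap.pi_apply]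
  have claim3 : ∀ n : ℕ, (n : ℝ) ≤ ‖fderiv ℝ (ψ n) m‖ := by
    intro n
    set w : EuclideanSpace ℝ (Fin 2) := EuclideanSpace.single 0 (1 : ℝ) with hw
    have hw0 : w 0 = 1 := by simp [hw]
    have hw1 : w 1 = 0 := by simp [hw]
    have hwn : ‖w‖ = 1 := by simp [hw]
    have hv : fderiv ℝ (ψ n) m w = ![(1 : ℝ), (n : ℝ)] := by
      rw [claim2 n w, hw0, hw1]
      norm_num
    have hnv : (n : ℝ) ≤ ‖fderiv ℝ (ψ n) m w‖ := by
      rw [EuclideanSpace.norm_eq, hv]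
      have hsum : (∑ i, ‖(![(1 : ℝ), (n : ℝ)]) i‖ ^ 2) = 1 + (n : ℝ) ^ 2 := by
        simp [Fin.sum_univ_two, sq_abs]
      rw [hsum]
      have h1 : (0 : ℝ) ≤ 1 + (n : ℝ) ^ 2 := by positivity
      nlinarith [Real.sq_sqrt h1, Real.sqrt_nonneg (1 + (n : ℝ) ^ 2)]
    calc (n : ℝ) ≤ ‖fderiv ℝ (ψ n) m w‖ := hnv
      _ ≤ ‖fderiv ℝ (ψ n) m‖ * ‖w‖ := (fderiv ℝ (ψ n) m).le_opNorm w
      _ = ‖fderiv ℝ (ψ n) m‖ := by rw [hwn, mul_one]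
  have claim4 : Tendsto (fun n : ℕ => ‖fderiv ℝ (ψ n) m‖) atTop atTop :=
    tendsto_atTop_mono claim3 tendsto_natCast_atTop_atTop
  refine ⟨?_, claim2, claim3, claim4, ?_⟩
  · intro n
    apply Function.bijective_iff_has_inverse.2
    refine ⟨fun p => (WithLp.toLp 2 ![p 0, p 1 - (n : ℝ) * f (p 0)] : EuclideanSpace ℝ (Fin 2)), ?_, ?_⟩
    · intro p
      ext i
      dsimp only
      rw [hψ n p]
      fin_cases i <;> simp
    · intro p
      ext i
      rw [hψ n _]
      fin_cases i <;> simp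
  · rintro ⟨μ, hμ⟩
    obtain ⟨k, hk⟩ := exists_nat_gt μ
    have := claim3 k
    have := hμ k
    linarith
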